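/- Let α > 0 and θ : [0,∞) → (0,∞) be differentiable with θ(λ) ≤ (ln λ)^α for large λ, and suppose (λ-1)θ'(λ-1)/(α θ(λ-1)) ≤ (1+ln(λ-1))/ln(λ-1) for λ large. Define ψ(λ) = θ(λ)(λ ln λ)^{-α}. Then for all sufficiently large λ, the derivative of λ ↦ ψ(λ-1)^{λ-1} satisfies (ψ(λ-1)^{λ-1})' ≤ -α ψ(λ-1)^{λ-1} ln((λ-1)ln(λ-1)/θ^{1/α}(λ-1)). -/

import Mathlib

open Real Set Filter

/-- Derivative estimate for `λ ↦ ψ(λ-1)^{λ-1}`, where `ψ(λ) = θ(λ)(λ ln λ)^{-α}`: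
for all sufficiently large `λ`,
`(ψ(λ-1)^{λ-1})' ≤ -α ψ(λ-1)^{λ-1} ln((λ-1)ln(λ-1)/θ^{1/α}(λ-1))`. -/
theorem stmt_7 (α : ℝ) (hα : 0 < α) (θ θ' : ℝ → ℝ)
    (hθpos : ∀ t, 0 < θ t)
    (hθderiv : ∀ t, HasDerivAt θ (θ' t) t)
    (hθbdd : ∃ T : ℝ, ∀ lam ≥ T, θ lam ≤ Real.log lam ^ α)
    (hineq : ∃ T : ℝ, ∀ lam ≥ T,
      (lam - 1) * θ' (lam - 1) / (α * θ (lam - 1)) ≤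
        (1 + Real.log (lam - 1)) / Real.log (lam - 1)) :
    ∃ L : ℝ, ∀ lam ≥ L, ∃ D : ℝ,
      HasDerivAt (fun s : ℝ => (θ (s - 1) * ((s - 1) * Real.log (s - 1)) ^ (-α)) ^ (s - 1))
        D lam ∧
      D ≤ -α * (θ (lam - 1) * ((lam - 1) * Real.log (lam - 1)) ^ (-α)) ^ (lam - 1) *
            Real.log ((lam - 1) * Real.log (lam - 1) / θ (lam - 1) ^ (1/α)) := by
  obtain ⟨T2, hT2⟩ := hineq
  refine ⟨max T2 (Real.exp 1 + 2), fun lam hlam => ?_⟩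
  have hlam2 : Real.exp 1 + 2 ≤ lam := le_trans (le_max_right _ _) hlam
  set t : ℝ := lam - 1 with ht
  have hexp1 : (1:ℝ) < Real.exp 1 := by
    have := Real.add_one_lt_exp (x := 1) one_ne_zero; linarith
  have htE : Real.exp 1 < t := by simp only [ht]; linarith
  have ht0 : (0:ℝ) < t := by linarith [Real.exp_pos 1]
  have hlogt : 1 < Real.log t := by
    calc (1:ℝ) = Real.log (Real.exp 1) := (Real.log_exp 1).symm
    _ < Real.log t := Real.log_lt_log (Real.exp_pos 1) htE
  have hlogt0 : (0:ℝ) < Real.log t := by linarith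
  have hu : (0:ℝ) < t * Real.log t := mul_pos ht0 hlogt0
  have hθt : (0:ℝ) < θ t := hθpos t
  have hA : (0:ℝ) < (t * Real.log t) ^ (-α) := Real.rpow_pos_of_pos hu _
  have hG : (0:ℝ) < θ t * (t * Real.log t) ^ (-α) := mul_pos hθt hA
  -- derivatives
  have hderiv_t : HasDerivAt (fun s : ℝ => s - 1) 1 lam := (hasDerivAt_id lam).sub_const 1
  have hlogd : HasDerivAt (fun s : ℝ => Real.log (s - 1)) (1 / t) lam := by
    have := (Real.hasDerivAt_log (ne_of_gt ht0)).comp lam hderiv_t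
    simpa [Function.comp_def] using this
  have hud : HasDerivAt (fun s : ℝ => (s - 1) * Real.log (s - 1)) (Real.log t + 1) lam := by
    have h := hderiv_t.mul hlogd
    convert h using 1
    · rfl
    · rfl
    · rfl
    · show Real.log t + 1 = 1 * Real.log t + t * (1 / t)
      rw [one_mul, mul_one_div_cancel ht0.ne']
  have hAd : HasDerivAt (fun s : ℝ => ((s - 1) * Real.log (s - 1)) ^ (-α))
      ((Real.log t + 1) * (-α) * (t * Real.log t) ^ (-α - 1)) lam :=
    hud.rpow_const (Or.inl hu.ne')
  have hθd : HasDerivAt (fun s : ℝ => θ (s - 1)) (θ' t) lam := by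
    have := (hθderiv t).comp lam hderiv_t
    simpa [Function.comp_def] using this
  have hGd : HasDerivAt (fun s : ℝ => θ (s - 1) * ((s - 1) * Real.log (s - 1)) ^ (-α))
      (θ' t * (t * Real.log t) ^ (-α)
        + θ t * ((Real.log t + 1) * (-α) * (t * Real.log t) ^ (-α - 1))) lam :=
    hθd.mul hAd
  have hFd := hGd.rpow hderiv_t hG
  refine ⟨_, hFd, ?_⟩
  -- notation
  set A : ℝ := (t * Real.log t) ^ (-α) with hAdef
  set G : ℝ := θ t * A with hGdef
  set F : ℝ := G ^ t with hFdef
  have hF : (0:ℝ) < F := Real.rpow_pos_of_pos hG _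
  -- key log identities
  have hA1 : (t * Real.log t) ^ (-α - 1) = A / (t * Real.log t) := by
    rw [hAdef, show -α - 1 = -α - 1 from rfl, Real.rpow_sub hu, Real.rpow_one]
  have hG1 : G ^ (t - 1) = F / G := by
    rw [hFdef, Real.rpow_sub hG, Real.rpow_one]
  have hlogG : Real.log G = Real.log (θ t) - α * Real.log (t * Real.log t) := by
    rw [hGdef, Real.log_mul hθt.ne' hA.ne', hAdef, Real.log_rpow hu]; ring
  have hlogR : Real.log (t * Real.log t / θ t ^ (1 / α)) =
      Real.log (t * Real.log t) - (1 / α) * Real.log (θ t) := by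
    rw [Real.log_div hu.ne' (Real.rpow_pos_of_pos hθt _).ne', Real.log_rpow hθt]
  -- the inequality from the hypothesis
  have hkey : t * θ' t / θ t ≤ α * ((1 + Real.log t) / Real.log t) := by
    have h := hT2 lam (le_trans (le_max_left _ _) hlam)
    have : t * θ' t / θ t = α * (t * θ' t / (α * θ t)) := by
      field_simp
    rw [this]
    exact mul_le_mul_of_nonneg_left h hα.le
  -- rewrite D and the RHS as F times bracket expressions
  have hDeq : (θ' t * (t * Real.log t) ^ (-α)
        + θ t * ((Real.log t + 1) * (-α) * (t * Real.log t) ^ (-α - 1))) * (lam - 1)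
        * G ^ (lam - 1 - 1) + 1 * G ^ (lam - 1) * Real.log G
      = F * ((t * θ' t / θ t - α * ((1 + Real.log t) / Real.log t))
          + (Real.log (θ t) - α * Real.log (t * Real.log t))) := by
    rw [← ht, hA1, hG1, ← hFdef, hlogG, hGdef, hAdef] at *
    field_simp
    ring
  have hReq : -α * G ^ (lam - 1) * Real.log (t * Real.log t / θ t ^ (1 / α))
      = F * (Real.log (θ t) - α * Real.log (t * Real.log t)) := by
    rw [← ht, ← hFdef, hlogR]
    field_simp
    ring
  rw [hDeq, hReq]
  have hbr : (t * θ' t / θ t - α * ((1 + Real.log t) / Real.log t))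
      + (Real.log (θ t) - α * Real.log (t * Real.log t))
      ≤ Real.log (θ t) - α * Real.log (t * Real.log t) := by
    nlinarith [hkey]
  exact mul_le_mul_of_nonneg_left hbr hF.le
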